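/- Let G be a finite tree whose vertices are colored black and white, such that every white vertex has degree at least three. Then the number of black vertices is strictly greater than the number of white vertices. -/
import Mathlib


open Finset

/-- In a finite tree colored black and white (black = `true`), if every white
vertex has degree at least three, then there are strictly more black vertices
than white vertices. -/
theorem tree_coloring_black_gt_white
    {V : Type*} [Fintype V] [DecidableEq V]
    (G : SimpleGraph V) [DecidableRel G.Adj]
    (hT : G.IsTree)
    (color : V → Bool)
    (hwhite : ∀ v, color v = false → 3 ≤ G.degree v) :
    (Finset.univ.filter (fun v => color v = false)).card
      < (Finset.univ.filter (fun v => color v = true)).card := by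
  classical
  set W := Finset.univ.filter (fun v => color v = false) with hW
  set B := Finset.univ.filter (fun v => color v = true) with hB
  have hBW : B = Finset.univ.filter (fun v => ¬ color v = false) := by
    rw [hB]; congr 1; ext v; simp
  have hsplit : W.card + B.card = Fintype.card V := by
    rw [hW, hBW, Finset.card_filter_add_card_filter_not, Finset.card_univ]
  rcases le_or_gt (Fintype.card V) 1 with hn | hn
  · -- at most one vertex; that vertex (if any) is black
    have hne : Nonempty V := hT.isConnected.nonempty
    have hcard : Fintype.card V = 1 := le_antisymm hn Fintype.card_pos
    obtain ⟨v, hv⟩ := Fintype.card_eq_one_iff.mp hcard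
    have hdeg : G.degree v = 0 := by
      by_contra h
      obtain ⟨w, hw⟩ := G.degree_pos_iff_exists_adj v |>.mp (Nat.pos_of_ne_zero h)
      exact G.ne_of_adj hw.symm (hv w)
    have hcv : color v = true := by
      by_contra h
      have := hwhite v (by simpa using h)
      omega
    have hWe : W.card = 0 := by
      rw [Finset.card_eq_zero, hW, Finset.filter_eq_empty_iff]
      intro x _
      rw [hv x, hcv]; simp
    have hBe : 0 < B.card := by
      rw [hB, Finset.card_pos]
      exact ⟨v, by simp [hcv]⟩
    omega
  · -- at least two vertices: every vertex has degree ≥ 1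
    have hdegpos : ∀ v : V, 1 ≤ G.degree v := by
      intro v
      obtain ⟨u, hu⟩ := Fintype.exists_ne_of_one_lt_card hn v
      obtain ⟨p⟩ := hT.isConnected v u
      cases p with
      | nil => exact absurd rfl hu.symm
      | cons h p =>
        rw [Nat.succ_le_iff, G.degree_pos_iff_exists_adj]
        exact ⟨_, h⟩
    have hsum : ∑ v : V, G.degree v = 2 * G.edgeFinset.card :=
      G.sum_degrees_eq_twice_card_edges
    have hedges : G.edgeFinset.card + 1 = Fintype.card V := hT.card_edgeFinset
    have hWB : ∑ v : V, G.degree v = ∑ v ∈ W, G.degree v + ∑ v ∈ B, G.degree v := by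
      rw [hW, hBW]
      exact (Finset.sum_filter_add_sum_filter_not _ _ _).symm
    have h1 : 3 * W.card ≤ ∑ v ∈ W, G.degree v := by
      rw [mul_comm, ← smul_eq_mul]
      exact Finset.card_nsmul_le_sum W _ 3 (fun x hx => hwhite x (by simpa [hW] using hx))
    have h2 : B.card ≤ ∑ v ∈ B, G.degree v := by
      calc B.card = B.card • 1 := by simp
      _ ≤ _ := Finset.card_nsmul_le_sum _ _ 1 (fun x _ => hdegpos x)
    omega
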